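/- Let X be a string and s > 0 a shift. If ED(X[0..|X|−s], X[s..|X|]) < 2s, then the 2s-block periodicity of X is at most 4s, i.e., X can be partitioned into at most 4s consecutive substrings, each of which is periodic with a period of length at most 2s. -/

import Mathlib

/-- The substring of `X` with indices in `{i, ..., j-1}` (out-of-bounds indices clipped). -/
def listSub {α : Type*} (X : List α) (i j : ℕ) : List α := (X.take j).drop i

/-- Substring with possibly negative (integer) endpoints, clipped. -/
def listSubZ {α : Type*} (X : List α) (i j : ℤ) : List α := listSub X i.toNat j.toNat

/-- The costs of the edit operations (formerly `Levenshtein.Cost` in Mathlib). -/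
structure Levenshtein.Cost (α β δ : Type*) where
  /-- Cost to delete an element from the source. -/
  delete : α → δ
  /-- Cost to insert an element into the destination. -/
  insert : β → δ
  /-- Cost to substitute one element for another. -/
  substitute : α → β → δ

/-- Unit costs (formerly `Levenshtein.defaultCost` in Mathlib). -/
def Levenshtein.defaultCost {α : Type*} [DecidableEq α] : Levenshtein.Cost α α ℕ where
  delete _ := 1
  insert _ := 1
  substitute a b := if a = b then 0 else 1

/-- Levenshtein distance with cost `C` (formerly `levenshtein` in Mathlib), given by its
defining recursion (the lemmas `levenshtein_nil_nil`, `levenshtein_nil_cons`,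
`levenshtein_cons_nil`, `levenshtein_cons_cons` of the former Mathlib). -/
def levenshtein {α β δ : Type*} [AddZeroClass δ] [Min δ] (C : Levenshtein.Cost α β δ) :
    List α → List β → δ
  | [], [] => 0
  | [], y :: ys => C.insert y + levenshtein C [] ys
  | x :: xs, [] => C.delete x + levenshtein C xs []
  | x :: xs, y :: ys =>
    min (C.delete x + levenshtein C xs (y :: ys))
      (min (C.insert y + levenshtein C (x :: xs) ys) (C.substitute x y + levenshtein C xs ys))

/-- Edit distance (Levenshtein distance) with unit costs. -/
def ED {α : Type*} [DecidableEq α] (X Y : List α) : ℕ :=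
  levenshtein Levenshtein.defaultCost X Y

/-- `X` is periodic with period `P`: `X` is a prefix of the infinite repetition of `P`. -/
def PeriodicWith {α : Type*} (X P : List α) : Prop :=
  P ≠ [] ∧ ∀ j, j < X.length → X[j]? = P[j % P.length]?

/-- `X` is `K`-periodic: periodic with some period of length at most `K`. -/
def IsPeriodic {α : Type*} (K : ℕ) (X : List α) : Prop :=
  ∃ P : List α, P.length ≤ K ∧ PeriodicWith X P

/-- `Y` can be partitioned into at most `L` consecutive `K`-periodic substrings. -/
def BPLe {α : Type*} (K L : ℕ) (Y : List α) : Prop :=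
  ∃ Ys : List (List α), Ys.flatten = Y ∧ Ys.length ≤ L ∧ ∀ Z ∈ Ys, IsPeriodic K Z

/-- The `K`-block periodicity of `Y`: the smallest `L` such that `Y` can be partitioned
into `L` consecutive `K`-periodic substrings. -/
noncomputable def bp {α : Type*} (K : ℕ) (Y : List α) : ℕ := sInf {L | BPLe K L Y}

theorem levenshtein_nil_cons {α β δ : Type*} [AddZeroClass δ] [Min δ]
    (C : Levenshtein.Cost α β δ) (y : β) (ys : List β) :
    levenshtein C [] (y :: ys) = C.insert y + levenshtein C [] ys := by
  rw [levenshtein]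

theorem levenshtein_cons_nil {α β δ : Type*} [AddZeroClass δ] [Min δ]
    (C : Levenshtein.Cost α β δ) (x : α) (xs : List α) :
    levenshtein C (x :: xs) [] = C.delete x + levenshtein C xs [] := by
  rw [levenshtein]

theorem levenshtein_cons_cons {α β δ : Type*} [AddZeroClass δ] [Min δ]
    (C : Levenshtein.Cost α β δ) (x : α) (xs : List α) (y : β) (ys : List β) :
    levenshtein C (x :: xs) (y :: ys) =
      min (C.delete x + levenshtein C xs (y :: ys))
        (min (C.insert y + levenshtein C (x :: xs) ys) (C.substitute x y + levenshtein C xs ys)) := by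
  rw [levenshtein]

theorem Levenshtein.defaultCost_delete {α : Type*} [DecidableEq α] (a : α) :
    (Levenshtein.defaultCost : Levenshtein.Cost α α ℕ).delete a = 1 := rfl

theorem Levenshtein.defaultCost_insert {α : Type*} [DecidableEq α] (a : α) :
    (Levenshtein.defaultCost : Levenshtein.Cost α α ℕ).insert a = 1 := rfl

theorem Levenshtein.defaultCost_substitute {α : Type*} [DecidableEq α] (a b : α) :
    (Levenshtein.defaultCost : Levenshtein.Cost α α ℕ).substitute a b = if a = b then 0 else 1 := rfl

namespace SelfAlign

/-- An explicit alignment (edit script) between two lists. -/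
inductive Al (α : Type*) where
  | nil : Al α
  | del : α → Al α → Al α
  | ins : α → Al α → Al α
  | sub : α → α → Al α → Al α
  | mat : α → Al α → Al α

namespace Al

variable {α : Type*}

/-- The left word of an alignment. -/
def left : Al α → List α
  | nil => []
  | del a t => a :: left t
  | ins _ t => left t
  | sub a _ t => a :: left t
  | mat a t => a :: left t

/-- The right word of an alignment. -/
def right : Al α → List α
  | nil => []
  | del _ t => right t
  | ins b t => b :: right t
  | sub _ b t => b :: right t
  | mat a t => a :: right t

/-- The cost of an alignment (unit costs). -/
def cost : Al α → ℕ
  | nil => 0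
  | del _ t => 1 + cost t
  | ins _ t => 1 + cost t
  | sub _ _ t => 1 + cost t
  | mat _ t => cost t

theorem length_le (t : Al α) :
    t.left.length ≤ t.right.length + t.cost ∧ t.right.length ≤ t.left.length + t.cost := by
  induction t with
  | nil => simp [left, right, cost]
  | del a t ih => simp [left, right, cost]; omega
  | ins b t ih => simp [left, right, cost]; omega
  | sub a b t ih => simp [left, right, cost]; omega
  | mat a t ih => simp [left, right, cost]; omega

/-- From the Levenshtein distance we can extract an explicit alignment of no larger cost. -/
theorem align_exists [DecidableEq α] (A B : List α) :
    ∃ t : Al α, t.left = A ∧ t.right = B ∧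
      t.cost ≤ levenshtein Levenshtein.defaultCost A B := by
  induction A generalizing B with
  | nil =>
    induction B with
    | nil => exact ⟨.nil, rfl, rfl, by simp [cost]⟩
    | cons b B ihB =>
      obtain ⟨t, h1, h2, h3⟩ := ihB
      refine ⟨.ins b t, h1, by simp [right, h2], ?_⟩
      simp only [levenshtein_nil_cons, Levenshtein.defaultCost_insert, cost]
      omega
  | cons a A ihA =>
    induction B with
    | nil =>
      obtain ⟨t, h1, h2, h3⟩ := ihA []
      refine ⟨.del a t, by simp [left, h1], h2, ?_⟩
      simp only [levenshtein_cons_nil, Levenshtein.defaultCost_delete, cost]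
      omega
    | cons b B ihB =>
      rw [levenshtein_cons_cons]
      set u := Levenshtein.defaultCost.delete a + levenshtein Levenshtein.defaultCost A (b :: B)
        with hu
      set v := Levenshtein.defaultCost.insert b + levenshtein Levenshtein.defaultCost (a :: A) B
        with hv
      set w := Levenshtein.defaultCost.substitute a b + levenshtein Levenshtein.defaultCost A B
        with hw
      have hcases : min u (min v w) = u ∨ min u (min v w) = v ∨ min u (min v w) = w := by
        omega
      rcases hcases with hc | hc | hc
      · obtain ⟨t, h1, h2, h3⟩ := ihA (b :: B)
        refine ⟨.del a t, by simp [left, h1], h2, ?_⟩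
        rw [hc, hu]
        simp only [Levenshtein.defaultCost_delete, cost]
        omega
      · obtain ⟨t, h1, h2, h3⟩ := ihB
        refine ⟨.ins b t, h1, by simp [right, h2], ?_⟩
        rw [hc, hv]
        simp only [Levenshtein.defaultCost_insert, cost]
        omega
      · obtain ⟨t, h1, h2, h3⟩ := ihA B
        by_cases hab : a = b
        · refine ⟨.mat a t, by simp [left, h1], by simp [right, h2, hab], ?_⟩
          rw [hc, hw]
          simp only [Levenshtein.defaultCost_substitute, if_pos hab, cost]
          omega
        · refine ⟨.sub a b t, by simp [left, h1], by simp [right, h2], ?_⟩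
          rw [hc, hw]
          simp only [Levenshtein.defaultCost_substitute, if_neg hab, cost]
          omega

end Al

variable {α : Type*}

theorem mod_periodic (L : List α) (p : ℕ) (hp : 0 < p)
    (h : ∀ u, p ≤ u → u < L.length → L[u]? = L[u - p]?) :
    ∀ u, u < L.length → L[u]? = L[u % p]? := by
  intro u
  induction u using Nat.strong_induction_on with
  | _ u ih =>
    intro hu
    rcases lt_or_ge u p with h1 | h1
    · rw [Nat.mod_eq_of_lt h1]
    · calc L[u]? = L[u - p]? := h u h1 hu
        _ = L[(u - p) % p]? := ih (u - p) (by omega) (by omega)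
        _ = L[u % p]? := by rw [Nat.mod_eq_sub_mod h1]

theorem periodic_singleton (K : ℕ) (hK : 1 ≤ K) (x : α) : IsPeriodic K [x] := by
  refine ⟨[x], by simpa using hK, by simp, ?_⟩
  intro j hj
  simp only [List.length_singleton] at hj
  obtain rfl : j = 0 := by omega
  simp

theorem periodic_self (K : ℕ) (Z : List α) (hK : Z.length ≤ K) (hZ : Z ≠ []) :
    IsPeriodic K Z := by
  refine ⟨Z, hK, hZ, ?_⟩
  intro j hj
  rw [Nat.mod_eq_of_lt hj]

/-- Closing a matched run: a run matched against a shift of itself inside `X` is periodic. -/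
theorem close_run (X : List α) (s i j : ℕ) (L : List α)
    (hp1 : i + 1 ≤ s + j) (hp2 : s + j ≤ i + 2 * s)
    (hinv : ∀ u, u < L.length → L[u]? = X[i + u]? ∧ L[u]? = X[s + j + u]?) :
    ∃ Cs : List (List α), Cs.flatten = L ∧ Cs.length ≤ 1 ∧
      ∀ Z ∈ Cs, IsPeriodic (2 * s) Z := by
  rcases eq_or_ne L [] with rfl | hL
  · exact ⟨[], rfl, by simp, by simp⟩
  have key : IsPeriodic (2 * s) L := by
    set p := s + j - i with hpdef
    have hp0 : 0 < p := by omega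
    have hp2s : p ≤ 2 * s := by omega
    have hstep : ∀ u, p ≤ u → u < L.length → L[u]? = L[u - p]? := by
      intro u hpu hu
      have h1 := (hinv u hu).1
      have h2 := (hinv (u - p) (by omega)).2
      rw [h1, h2, show i + u = s + j + (u - p) by omega]
    have hmod := mod_periodic L p hp0 hstep
    rcases le_or_gt L.length p with hlp | hlp
    · -- the run is shorter than the period: it is its own period
      exact periodic_self (2 * s) L (by omega) hL
    · refine ⟨L.take p, by simp; omega, ?_, ?_⟩
      · simp only [ne_eq, List.take_eq_nil_iff, not_or]
        constructor
        · omega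
        · exact hL
      · intro u hu
        have hlen : (L.take p).length = p := by simp; omega
        rw [hlen, hmod u hu, List.getElem?_take_of_lt (Nat.mod_lt u hp0)]
  refine ⟨[L], by simp, by simp, ?_⟩
  intro Z hZ
  simp only [List.mem_singleton] at hZ
  subst hZ
  exact key

/-- Main induction: from an alignment of a suffix-state of `X.take (|X|-s)` against
`X.drop s` we extract a block decomposition consisting of an initial matched run plus
at most `2 * cost` further periodic blocks. -/
theorem main [DecidableEq α] (X : List α) (s : ℕ) (hs : 0 < s) (t : Al α) :
    ∀ i j e : ℕ,
      t.left = (X.take (X.length - s)).drop i →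
      t.right = (X.drop s).drop j →
      i ≤ j + e → j ≤ i + e → t.cost + e < 2 * s →
      i ≤ X.length - s → j ≤ X.length - s →
      ∃ (L : List α) (Bs : List (List α)),
        L ++ Bs.flatten = t.left ∧
        Bs.length ≤ 2 * t.cost ∧
        (∀ u, u < L.length → L[u]? = X[i + u]? ∧ L[u]? = X[s + j + u]?) ∧
        (∀ Z ∈ Bs, IsPeriodic (2 * s) Z) := by
  set N := X.length - s with hNdef
  have hA : (X.take N).length = N := by simp; omega
  have hB : (X.drop s).length = N := by simp; try omega
  induction t with
  | nil =>
    intro i j e h1 h2 h3 h4 h5 h6 h7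
    exact ⟨[], [], by simp [Al.left], by simp [Al.cost], by simp, by simp⟩
  | del a t ih =>
    intro i j e h1 h2 h3 h4 h5 h6 h7
    simp only [Al.left] at h1
    simp only [Al.right] at h2
    simp only [Al.cost] at h5
    have hiN : i < N := by
      by_contra hc
      have : (X.take N).drop i = [] := List.drop_eq_nil_of_le (by omega)
      rw [this] at h1
      exact absurd h1 (by simp)
    have htl : t.left = (X.take N).drop (i + 1) := by
      have := congrArg (List.drop 1) h1
      simpa [List.drop_drop] using this
    obtain ⟨L', Bs', hflat', hlen', hinv', hper'⟩ :=
      ih (i + 1) j (e + 1) htl h2 (by omega) (by omega) (by omega) (by omega) h7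
    -- length facts to bound the offset
    have hlenL : t.left.length = N - (i + 1) := by rw [htl]; simp [hA]
    have hlenR : t.right.length = N - j := by rw [h2]; simp only [List.length_drop]; try omega
    have hcb := Al.length_le t
    rw [hlenL, hlenR] at hcb
    obtain ⟨Cs, hCs1, hCs2, hCs3⟩ := close_run X s (i + 1) j L' (by omega) (by omega) hinv'
    refine ⟨[], [a] :: (Cs ++ Bs'), ?_, ?_, by simp, ?_⟩
    · simp only [List.nil_append, List.flatten_cons, List.flatten_append, hCs1, Al.left]
      simp [hflat']
    · simp only [List.length_cons, List.length_append, Al.cost]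
      omega
    · intro Z hZ
      simp only [List.mem_cons, List.mem_append] at hZ
      rcases hZ with rfl | hZ | hZ
      · exact periodic_singleton (2 * s) (by omega) a
      · exact hCs3 Z hZ
      · exact hper' Z hZ
  | ins b t ih =>
    intro i j e h1 h2 h3 h4 h5 h6 h7
    simp only [Al.right] at h2
    simp only [Al.left] at h1
    simp only [Al.cost] at h5
    have hjN : j < N := by
      by_contra hc
      have : (X.drop s).drop j = [] := List.drop_eq_nil_of_le (by omega)
      rw [this] at h2
      exact absurd h2 (by simp)
    have htr : t.right = (X.drop s).drop (j + 1) := by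
      have := congrArg (List.drop 1) h2
      simpa [List.drop_drop, Nat.add_assoc] using this
    obtain ⟨L', Bs', hflat', hlen', hinv', hper'⟩ :=
      ih i (j + 1) (e + 1) h1 htr (by omega) (by omega) (by omega) h6 (by omega)
    have hlenL : t.left.length = N - i := by rw [h1]; simp [hA]
    have hlenR : t.right.length = N - (j + 1) := by
      rw [htr]; simp only [List.length_drop]; try omega
    have hcb := Al.length_le t
    rw [hlenL, hlenR] at hcb
    obtain ⟨Cs, hCs1, hCs2, hCs3⟩ := close_run X s i (j + 1) L' (by omega) (by omega) hinv'
    refine ⟨[], Cs ++ Bs', ?_, ?_, by simp, ?_⟩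
    · simp only [List.nil_append, List.flatten_append, hCs1]
      exact hflat'
    · simp only [List.length_append, Al.cost]
      omega
    · intro Z hZ
      simp only [List.mem_append] at hZ
      rcases hZ with hZ | hZ
      · exact hCs3 Z hZ
      · exact hper' Z hZ
  | sub a b t ih =>
    intro i j e h1 h2 h3 h4 h5 h6 h7
    simp only [Al.left] at h1
    simp only [Al.right] at h2
    simp only [Al.cost] at h5
    have hiN : i < N := by
      by_contra hc
      have : (X.take N).drop i = [] := List.drop_eq_nil_of_le (by omega)
      rw [this] at h1
      exact absurd h1 (by simp)
    have hjN : j < N := by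
      by_contra hc
      have : (X.drop s).drop j = [] := List.drop_eq_nil_of_le (by omega)
      rw [this] at h2
      exact absurd h2 (by simp)
    have htl : t.left = (X.take N).drop (i + 1) := by
      have := congrArg (List.drop 1) h1
      simpa [List.drop_drop] using this
    have htr : t.right = (X.drop s).drop (j + 1) := by
      have := congrArg (List.drop 1) h2
      simpa [List.drop_drop, Nat.add_assoc] using this
    obtain ⟨L', Bs', hflat', hlen', hinv', hper'⟩ :=
      ih (i + 1) (j + 1) e htl htr (by omega) (by omega) (by omega) (by omega) (by omega)
    have hlenL : t.left.length = N - (i + 1) := by rw [htl]; simp [hA]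
    have hlenR : t.right.length = N - (j + 1) := by
      rw [htr]; simp only [List.length_drop]; try omega
    have hcb := Al.length_le t
    rw [hlenL, hlenR] at hcb
    obtain ⟨Cs, hCs1, hCs2, hCs3⟩ :=
      close_run X s (i + 1) (j + 1) L' (by omega) (by omega) hinv'
    refine ⟨[], [a] :: (Cs ++ Bs'), ?_, ?_, by simp, ?_⟩
    · simp only [List.nil_append, List.flatten_cons, List.flatten_append, hCs1, Al.left]
      simp [hflat']
    · simp only [List.length_cons, List.length_append, Al.cost]
      omega
    · intro Z hZ
      simp only [List.mem_cons, List.mem_append] at hZ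
      rcases hZ with rfl | hZ | hZ
      · exact periodic_singleton (2 * s) (by omega) a
      · exact hCs3 Z hZ
      · exact hper' Z hZ
  | mat a t ih =>
    intro i j e h1 h2 h3 h4 h5 h6 h7
    simp only [Al.left] at h1
    simp only [Al.right] at h2
    simp only [Al.cost] at h5
    have hiN : i < N := by
      by_contra hc
      have : (X.take N).drop i = [] := List.drop_eq_nil_of_le (by omega)
      rw [this] at h1
      exact absurd h1 (by simp)
    have hjN : j < N := by
      by_contra hc
      have : (X.drop s).drop j = [] := List.drop_eq_nil_of_le (by omega)
      rw [this] at h2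
      exact absurd h2 (by simp)
    have htl : t.left = (X.take N).drop (i + 1) := by
      have := congrArg (List.drop 1) h1
      simpa [List.drop_drop] using this
    have htr : t.right = (X.drop s).drop (j + 1) := by
      have := congrArg (List.drop 1) h2
      simpa [List.drop_drop, Nat.add_assoc] using this
    obtain ⟨L', Bs', hflat', hlen', hinv', hper'⟩ :=
      ih (i + 1) (j + 1) e htl htr (by omega) (by omega) h5 (by omega) (by omega)
    -- head element facts
    have hXa : X[i]? = some a := by
      have : (X.take N)[i]? = some a := by
        have := congrArg (fun l => l[0]?) h1
        simpa [List.getElem?_drop] using this.symm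
      rwa [List.getElem?_take_of_lt hiN] at this
    have hXb : X[s + j]? = some a := by
      have : (X.drop s)[j]? = some a := by
        have := congrArg (fun l => l[0]?) h2
        simpa [List.getElem?_drop] using this.symm
      rwa [List.getElem?_drop] at this
    refine ⟨a :: L', Bs', ?_, ?_, ?_, hper'⟩
    · simp only [List.cons_append, Al.left, hflat']
    · simpa [Al.cost] using hlen'
    · intro u hu
      match u with
      | 0 => simpa using ⟨hXa.symm, hXb.symm⟩
      | v + 1 =>
        have hv : v < L'.length := by simpa using hu
        have := hinv' v hv
        constructor
        · have := this.1
          rw [show i + 1 + v = i + (v + 1) by omega] at this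
          simpa using this
        · have := this.2
          rw [show s + (j + 1) + v = s + j + (v + 1) by omega] at this
          simpa using this

end SelfAlign

/-- Self-alignment implies small block periodicity: if
`ED(X[0..|X|-s], X[s..|X|]) < 2s` then `bp_{2s}(X) ≤ 4s`, i.e. `X` can be partitioned
into at most `4s` consecutive substrings, each periodic with a period of length at most `2s`. -/
theorem self_alignment_implies_small_block_periodicity {α : Type*} [DecidableEq α]
    (X : List α) (s : ℕ) (hs : 0 < s)
    (h : ED (listSub X 0 (X.length - s)) (listSub X s X.length) < 2 * s) :
    BPLe (2 * s) (4 * s) X := by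
  rcases eq_or_ne X [] with rfl | hX
  · exact ⟨[], by simp, by simp, by simp⟩
  have hn : 0 < X.length := List.length_pos_iff.mpr hX
  set N := X.length - s with hNdef
  have e1 : listSub X 0 (X.length - s) = X.take N := by simp [listSub]; omega
  have e2 : listSub X s X.length = X.drop s := by simp [listSub]
  rw [e1, e2] at h
  obtain ⟨t, hl, hr, hc⟩ := SelfAlign.Al.align_exists (X.take N) (X.drop s)
  have hc2 : t.cost < 2 * s := lt_of_le_of_lt hc h
  obtain ⟨L, Bs, hflat, hlen, hinv, hper⟩ :=
    SelfAlign.main X s hs t 0 0 0 (by simpa using hl) (by simpa using hr)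
      le_rfl le_rfl (by omega) (by omega) (by omega)
  obtain ⟨Cs, hCs1, hCs2, hCs3⟩ :=
    SelfAlign.close_run X s 0 0 L (by omega) (by omega) hinv
  have hNlt : N < X.length := by omega
  have htail : (X.drop N) ≠ [] := by
    simp only [ne_eq, List.drop_eq_nil_iff]
    omega
  refine ⟨Cs ++ Bs ++ [X.drop N], ?_, ?_, ?_⟩
  · rw [List.flatten_append, List.flatten_append, hCs1]
    simp only [List.flatten_cons, List.flatten_nil, List.append_nil]
    rw [hflat, hl]
    exact List.take_append_drop N X
  · simp only [List.length_append, List.length_cons, List.length_nil]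
    omega
  · intro Z hZ
    simp only [List.mem_append, List.mem_singleton] at hZ
    rcases hZ with (hZ | hZ) | rfl
    · exact hCs3 Z hZ
    · exact hper Z hZ
    · exact SelfAlign.periodic_self (2 * s) (X.drop N) (by simp; omega) htail
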